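/- Let F = {f₁,…,f_N} be an ε-universal hash family from X to Y (|X| = K), and let ψ_H : Y → ℂ^m be a δ-resistant classical-quantum function (unit vectors with pairwise inner products bounded by δ). Define ψ_G(w) = (1/√N) Σ_{i=1}^N |i⟩ ⊗ ψ_H(f_i(w)). Then for any distinct w, w' ∈ X, |⟨ψ_G(w)|ψ_G(w')⟩| ≤ ε + δ. -/

import Mathlib

open scoped InnerProductSpace

theorem stmt_3 {X Y : Type*} [Fintype X] [DecidableEq Y]
    (N m : ℕ) (hN : 0 < N) (ε δ : ℝ) (hε : 0 ≤ ε) (hδ : 0 ≤ δ)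
    (f : Fin N → X → Y)
    (huniv : ∀ w w' : X, w ≠ w' →
      ((Finset.univ.filter fun i : Fin N => f i w = f i w').card : ℝ) ≤ ε * N)
    (ψH : Y → EuclideanSpace ℂ (Fin m))
    (hunit : ∀ v, ‖ψH v‖ = 1)
    (hres : ∀ v v', v ≠ v' → ‖(⟪ψH v, ψH v'⟫_ℂ)‖ ≤ δ)
    (ψG : X → EuclideanSpace ℂ (Fin N × Fin m))
    (hψG : ∀ w i j, ψG w (i, j) = (1 / Real.sqrt N) * ψH (f i w) j) :
    ∀ w w' : X, w ≠ w' → ‖(⟪ψG w, ψG w'⟫_ℂ)‖ ≤ ε + δ := by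
  intro w w' hww
  have hNR : (0:ℝ) < N := by exact_mod_cast hN
  have hsq : ((Real.sqrt N : ℝ) : ℂ) * ((Real.sqrt N : ℝ) : ℂ) = (N : ℂ) := by
    norm_cast
    exact Real.mul_self_sqrt hNR.le
  have key : ⟪ψG w, ψG w'⟫_ℂ = (N:ℂ)⁻¹ * ∑ i : Fin N, ⟪ψH (f i w), ψH (f i w')⟫_ℂ := by
    rw [PiLp.inner_apply, Fintype.sum_prod_type, Finset.mul_sum]
    refine Finset.sum_congr rfl fun i _ => ?_
    rw [PiLp.inner_apply, Finset.mul_sum]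
    refine Finset.sum_congr rfl fun j _ => ?_
    rw [hψG, hψG, RCLike.inner_apply, RCLike.inner_apply, map_mul]
    rw [show (starRingEnd ℂ) (1 / ((Real.sqrt N : ℝ) : ℂ)) = 1 / ((Real.sqrt N : ℝ) : ℂ) by
      rw [map_div₀, map_one, Complex.conj_ofReal]]
    have h1 : (1 / ((Real.sqrt N : ℝ) : ℂ)) * (1 / ((Real.sqrt N : ℝ) : ℂ)) = (N:ℂ)⁻¹ := by
      rw [div_mul_div_comm, one_mul, hsq, one_div]
    calc (1 / ((Real.sqrt N : ℝ) : ℂ) * ψH (f i w') j)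
          * (1 / ((Real.sqrt N : ℝ) : ℂ) * (starRingEnd ℂ) (ψH (f i w) j))
        = (1 / ((Real.sqrt N : ℝ) : ℂ)) * (1 / ((Real.sqrt N : ℝ) : ℂ))
          * (ψH (f i w') j * (starRingEnd ℂ) (ψH (f i w) j)) := by ring
      _ = (N:ℂ)⁻¹ * (ψH (f i w') j * (starRingEnd ℂ) (ψH (f i w) j)) := by rw [h1]
  rw [key]
  have hCS : ∀ i : Fin N, ‖⟪ψH (f i w), ψH (f i w')⟫_ℂ‖ ≤ 1 := by
    intro i
    calc ‖⟪ψH (f i w), ψH (f i w')⟫_ℂ‖ ≤ ‖ψH (f i w)‖ * ‖ψH (f i w')‖ := norm_inner_le_norm _ _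
    _ = 1 := by rw [hunit, hunit]; ring
  set S := Finset.univ.filter fun i : Fin N => f i w = f i w' with hS
  have hsum : ‖∑ i : Fin N, ⟪ψH (f i w), ψH (f i w')⟫_ℂ‖ ≤ ε * N + δ * N := by
    calc ‖∑ i : Fin N, ⟪ψH (f i w), ψH (f i w')⟫_ℂ‖
        ≤ ∑ i : Fin N, ‖⟪ψH (f i w), ψH (f i w')⟫_ℂ‖ := norm_sum_le _ _
      _ = ∑ i ∈ S, ‖⟪ψH (f i w), ψH (f i w')⟫_ℂ‖
          + ∑ i ∈ Finset.univ.filter fun i => ¬ f i w = f i w',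
              ‖⟪ψH (f i w), ψH (f i w')⟫_ℂ‖ :=
            (Finset.sum_filter_add_sum_filter_not _ _ _).symm
      _ ≤ ∑ i ∈ S, 1 + ∑ i ∈ Finset.univ.filter (fun i => ¬ f i w = f i w'), δ := by
            gcongr with i hi i hi
            · exact hCS i
            · exact hres _ _ (Finset.mem_filter.mp hi).2
      _ = (S.card : ℝ) + ((Finset.univ.filter fun i => ¬ f i w = f i w').card : ℝ) * δ := by
            simp [Finset.sum_const, nsmul_eq_mul]
      _ ≤ ε * N + N * δ := by
            refine add_le_add (huniv w w' hww) ?_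
            refine mul_le_mul_of_nonneg_right ?_ hδ
            exact_mod_cast Finset.card_filter_le _ _ |>.trans (by simp)
      _ = ε * N + δ * N := by ring
  rw [norm_mul]
  have : ‖(N:ℂ)⁻¹‖ = (N:ℝ)⁻¹ := by
    simp
  rw [this]
  calc (N:ℝ)⁻¹ * ‖∑ i : Fin N, ⟪ψH (f i w), ψH (f i w')⟫_ℂ‖
      ≤ (N:ℝ)⁻¹ * (ε * N + δ * N) := by
        exact mul_le_mul_of_nonneg_left hsum (by positivity)
    _ = ε + δ := by field_simp
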